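/- Let $z:(x_1,x_2)\to(0,\infty)$ be the maximal solution of $z''/(1+z'^2)=-2/z$ with $z(x_0)=z_0$, $z'(x_0)=0$. Then for $x > x_0$ in the domain, $z$ satisfies $z' = -\sqrt{(z_0/z)^4 - 1}$, i.e., $z$ solves a first-order separable ODE determined by the first integral. -/

import Mathlib

open Set

/-- `z` is a positive solution of `z''/(1+z'^2) = -2/z` on the interval `(x1, x2)`. -/
def IsSol (x1 x2 : ℝ) (z : ℝ → ℝ) : Prop :=
  (∀ x ∈ Ioo x1 x2, 0 < z x) ∧
  (∀ x ∈ Ioo x1 x2, DifferentiableAt ℝ z x) ∧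
  (∀ x ∈ Ioo x1 x2, DifferentiableAt ℝ (deriv z) x) ∧
  (∀ x ∈ Ioo x1 x2, deriv (deriv z) x / (1 + (deriv z x) ^ 2) = -2 / z x)

/-- `z` is a maximal solution: it admits no extension to a strictly larger interval. -/
def IsMaxSol (x1 x2 : ℝ) (z : ℝ → ℝ) : Prop :=
  x1 < x2 ∧ IsSol x1 x2 z ∧
  ∀ y1 y2 : ℝ, ∀ w : ℝ → ℝ, IsSol y1 y2 w → Ioo x1 x2 ⊆ Ioo y1 y2 →
    EqOn w z (Ioo x1 x2) → Ioo y1 y2 = Ioo x1 x2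

/-- On the decreasing branch past the maximum `z0`, the maximal solution of
`z''/(1+z'^2) = -2/z` satisfies `z' = -√((z0/z)⁴ - 1)`. -/
theorem stmt18 (x1 x2 x0 z0 : ℝ) (z : ℝ → ℝ)
    (hmaxsol : IsMaxSol x1 x2 z)
    (hx0 : x0 ∈ Ioo x1 x2) (hval : z x0 = z0) (hcrit : deriv z x0 = 0) :
    ∀ x ∈ Ioo x0 x2, deriv z x = -Real.sqrt ((z0 / z x) ^ 4 - 1) := by
  obtain ⟨hlt, ⟨hpos, hdiff, hdiff2, hode⟩, -⟩ := hmaxsol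
  -- second derivative formula
  have hd2 : ∀ x ∈ Ioo x1 x2, deriv (deriv z) x = -2 / z x * (1 + (deriv z x) ^ 2) := by
    intro x hx
    have h1 : (0:ℝ) < 1 + (deriv z x) ^ 2 := by positivity
    have hz := (hpos x hx).ne'
    have h := hode x hx
    field_simp at h ⊢
    linarith [h]
  -- second derivative is negative
  have hd2neg : ∀ x ∈ Ioo x1 x2, deriv (deriv z) x < 0 := by
    intro x hx
    rw [hd2 x hx]
    have h1 : (0:ℝ) < 1 + (deriv z x) ^ 2 := by positivity
    have hz := hpos x hx
    have : -2 / z x < 0 := div_neg_of_neg_of_pos (by norm_num) hz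
    exact mul_neg_of_neg_of_pos this h1
  -- z' is strictly decreasing
  have hanti : StrictAntiOn (deriv z) (Ioo x1 x2) := by
    apply strictAntiOn_of_deriv_neg (convex_Ioo x1 x2)
    · exact fun y hy => ((hdiff2 y hy).continuousAt).continuousWithinAt
    · intro y hy
      rw [interior_Ioo] at hy
      exact hd2neg y hy
  -- energy function
  set f : ℝ → ℝ := fun x => (z x) ^ 4 * (1 + (deriv z x) ^ 2) with hf
  have hE : ∀ x ∈ Ioo x1 x2, HasDerivAt f 0 x := by
    intro x hx
    have hz : HasDerivAt z (deriv z x) x := (hdiff x hx).hasDerivAt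
    have hz' : HasDerivAt (deriv z) (deriv (deriv z) x) x := (hdiff2 x hx).hasDerivAt
    have h : HasDerivAt f _ x := (hz.fun_pow 4).fun_mul ((hz'.fun_pow 2).const_add 1)
    convert h using 1
    rw [hd2 x hx]
    have hzx := (hpos x hx).ne'
    field_simp
    ring
  intro x hx
  have hxI : x ∈ Ioo x1 x2 := ⟨lt_trans hx0.1 hx.1, hx.2⟩
  have hsub : Icc x0 x ⊆ Ioo x1 x2 := fun y hy =>
    ⟨lt_of_lt_of_le hx0.1 hy.1, lt_of_le_of_lt hy.2 hxI.2⟩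
  have hconst : f x = f x0 := by
    have := constant_of_has_deriv_right_zero (f := f) (a := x0) (b := x)
      (fun y hy => ((hE y (hsub hy)).continuousAt).continuousWithinAt)
      (fun y hy => (hE y (hsub (Ico_subset_Icc_self hy))).hasDerivWithinAt)
    exact this x ⟨le_of_lt hx.1, le_refl x⟩
  have hfx0 : f x0 = z0 ^ 4 := by
    simp [hf, hval, hcrit]
  have hfx : (z x) ^ 4 * (1 + (deriv z x) ^ 2) = z0 ^ 4 := by
    rw [← hfx0, ← hconst]
  have hneg : deriv z x < 0 := by
    have := hanti hx0 hxI hx.1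
    rwa [hcrit] at this
  have hzx := (hpos x hxI).ne'
  have h2 : (z0 / z x) ^ 4 - 1 = (deriv z x) ^ 2 := by
    field_simp
    nlinarith [hfx]
  rw [h2, Real.sqrt_sq_eq_abs, abs_of_neg hneg, neg_neg]
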